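/- arXiv:2511.15473 — 3 statements merged into one kernel-verified Lean document; each statement's English description precedes it below -/
import Mathlib

section
/- Every skew-symmetric matrix-valued symmetric bilinear form on the space of skew-symmetric n×n matrices that is invariant under conjugation by O(n) is a scalar multiple of the Frobenius inner product: there exists λ ∈ ℝ such that E • E' = λ tr(Eᵀ E') for all skew-symmetric E, E'. -/
open Matrix

namespace Stmt7
variable {n : ℕ}

/-- The skew basis matrix `e_{ij} - e_{ji}`. -/
def A (i j : Fin n) : Matrix (Fin n) (Fin n) ℝ :=
  Matrix.single i j 1 - Matrix.single j i 1

lemma A_apply (i j a b : Fin n) :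
    A i j a b = (if i = a ∧ j = b then (1:ℝ) else 0) - (if j = a ∧ i = b then 1 else 0) := by
  simp [A, Matrix.single]

lemma A_skew (i j : Fin n) : (A i j)ᵀ = -(A i j) := by
  ext a b
  simp only [Matrix.transpose_apply, Matrix.neg_apply, A_apply]
  by_cases h1 : i = a <;> by_cases h2 : j = b <;> by_cases h3 : i = b <;> by_cases h4 : j = a <;>
    simp [h1, h2, h3, h4, and_comm]

lemma A_swap (i j : Fin n) : A j i = -A i j := by
  ext a b; simp [A_apply]

lemma A_same (i : Fin n) : A i i = 0 := by
  ext a b; simp [A_apply]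

/-- Signed-permutation conjugation. -/
def conjM (g : Fin n → ℝ) (σ : Equiv.Perm (Fin n)) (E : Matrix (Fin n) (Fin n) ℝ) :
    Matrix (Fin n) (Fin n) ℝ :=
  Matrix.of fun a b => g a * g b * E (σ a) (σ b)

lemma conjM_apply (g : Fin n → ℝ) (σ : Equiv.Perm (Fin n)) (E : Matrix (Fin n) (Fin n) ℝ)
    (a b : Fin n) : conjM g σ E a b = g a * g b * E (σ a) (σ b) := rfl

lemma conjM_skew (g : Fin n → ℝ) (σ : Equiv.Perm (Fin n)) {E : Matrix (Fin n) (Fin n) ℝ}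
    (hE : Eᵀ = -E) : (conjM g σ E)ᵀ = -(conjM g σ E) := by
  ext a b
  have : E (σ b) (σ a) = -E (σ a) (σ b) := by
    have := congrFun (congrFun hE (σ a)) (σ b)
    simpa [Matrix.transpose_apply] using this
  simp only [Matrix.transpose_apply, Matrix.neg_apply, conjM_apply, this]
  ring

/-- The signed permutation matrix. -/
def OM (g : Fin n → ℝ) (σ : Equiv.Perm (Fin n)) : Matrix (Fin n) (Fin n) ℝ :=
  Matrix.of fun a b => if σ a = b then g a else 0

lemma OM_mul_transpose (g : Fin n → ℝ) (σ : Equiv.Perm (Fin n))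
    (hg : ∀ a, g a = 1 ∨ g a = -1) : OM g σ * (OM g σ)ᵀ = 1 := by
  ext a b
  simp only [Matrix.mul_apply, Matrix.transpose_apply, OM, Matrix.of_apply]
  rw [Finset.sum_eq_single (σ a)]
  · by_cases hab : a = b
    · subst hab
      rcases hg a with h | h <;> simp [h]
    · have : ¬ σ b = σ a := fun h => hab (σ.injective h).symm
      simp [this, Matrix.one_apply, hab]
  · intro c _ hc
    simp [Ne.symm hc]
  · simp

lemma OM_mem (g : Fin n → ℝ) (σ : Equiv.Perm (Fin n)) (hg : ∀ a, g a = 1 ∨ g a = -1) :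
    OM g σ ∈ Matrix.orthogonalGroup (Fin n) ℝ := by
  rw [Matrix.mem_orthogonalGroup_iff]
  have : star (OM g σ) = (OM g σ)ᵀ := rfl
  rw [OM_mul_transpose g σ hg]

lemma OM_inv (g : Fin n → ℝ) (σ : Equiv.Perm (Fin n)) (hg : ∀ a, g a = 1 ∨ g a = -1) :
    (OM g σ)⁻¹ = (OM g σ)ᵀ :=
  Matrix.inv_eq_right_inv (OM_mul_transpose g σ hg)

lemma conj_eq (g : Fin n → ℝ) (σ : Equiv.Perm (Fin n)) (hg : ∀ a, g a = 1 ∨ g a = -1)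
    (E : Matrix (Fin n) (Fin n) ℝ) :
    OM g σ * E * (OM g σ)⁻¹ = conjM g σ E := by
  rw [OM_inv g σ hg]
  ext a b
  simp only [Matrix.mul_apply, Matrix.transpose_apply, OM, Matrix.of_apply, conjM_apply]
  have h1 : ∀ d, (∑ c, (if σ a = c then g a else 0) * E c d) = g a * E (σ a) d := by
    intro d
    rw [Finset.sum_eq_single (σ a)]
    · simp
    · intro c _ hc; simp [Ne.symm hc]
    · simp
  simp only [h1]
  rw [Finset.sum_eq_single (σ b)]
  · simp; ring
  · intro c _ hc; simp [Ne.symm hc]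
  · simp


def flipg (m : Fin n) : Fin n → ℝ := fun a => if a = m then -1 else 1

lemma flipg_pm (m a : Fin n) : flipg m a = 1 ∨ flipg m a = -1 := by
  unfold flipg; split_ifs <;> simp

lemma conjM_flip_A_neg (m i j : Fin n)
    (h : (m = i ∧ m ≠ j) ∨ (m = j ∧ m ≠ i)) :
    conjM (flipg m) 1 (A i j) = -(A i j) := by
  ext a b
  simp only [conjM_apply, Equiv.Perm.coe_one, id_eq, Matrix.neg_apply, A_apply, flipg]
  rcases h with ⟨h1, h2⟩ | ⟨h1, h2⟩ <;> subst h1 <;>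
    by_cases ha : a = m <;> by_cases hb : b = m <;>
      simp_all <;> split_ifs <;> simp_all <;> ring

lemma conjM_flip_A_fix (m k l : Fin n) (hk : m ≠ k) (hl : m ≠ l) :
    conjM (flipg m) 1 (A k l) = A k l := by
  ext a b
  simp only [conjM_apply, Equiv.Perm.coe_one, id_eq, A_apply, flipg]
  by_cases ha : a = m <;> by_cases hb : b = m <;>
    simp_all <;> split_ifs <;> simp_all <;> ring

lemma conjM_perm_A (σ : Equiv.Perm (Fin n)) (i j : Fin n) :
    conjM 1 σ (A i j) = A (σ⁻¹ i) (σ⁻¹ j) := by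
  ext a b
  simp [conjM_apply, A_apply, Equiv.Perm.inv_def, Equiv.symm_apply_eq]

/-- a permutation sending i to 0 and j to 1 -/
lemma exists_perm (hn : 2 ≤ n) (i j : Fin n) (hij : i ≠ j) :
    ∃ σ : Equiv.Perm (Fin n), σ i = ⟨0, by omega⟩ ∧ σ j = ⟨1, by omega⟩ := by
  set z : Fin n := ⟨0, by omega⟩
  set o : Fin n := ⟨1, by omega⟩
  set s1 := Equiv.swap i z
  have h1 : s1 i = z := Equiv.swap_apply_left i z
  have hj : s1 j ≠ z := by
    intro h
    have := s1.injective (h.trans h1.symm)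
    exact hij this.symm
  set s2 := Equiv.swap (s1 j) o
  refine ⟨s1.trans s2, ?_, ?_⟩
  · simp only [Equiv.trans_apply, h1]
    exact Equiv.swap_apply_of_ne_of_ne (Ne.symm hj) (by simp [z, o, Fin.ext_iff])
  · simp only [Equiv.trans_apply]
    exact Equiv.swap_apply_left _ _

lemma decomp {E : Matrix (Fin n) (Fin n) ℝ} (hE : Eᵀ = -E) :
    ∑ i, ∑ j, E i j • A i j = (2:ℝ) • E := by
  ext a b
  have hba : E b a = -E a b := by
    have := congrFun (congrFun hE a) b
    simpa [Matrix.transpose_apply] using this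
  simp only [Matrix.sum_apply, Matrix.smul_apply, A_apply, smul_eq_mul, mul_sub]
  rw [Finset.sum_congr rfl (fun i _ => Finset.sum_sub_distrib _ _)]
  rw [Finset.sum_sub_distrib _ _]
  have e1 : ∑ i, ∑ j, E i j * (if i = a ∧ j = b then (1:ℝ) else 0) = E a b := by
    simp [Finset.sum_ite_eq, ite_and, Finset.mul_sum]
  have e2 : ∑ i, ∑ j, E i j * (if j = a ∧ i = b then (1:ℝ) else 0) = E b a := by
    simp [Finset.sum_ite_eq, ite_and, Finset.mul_sum]
  rw [e1, e2, hba]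
  ring


lemma collapse (M : Matrix (Fin n) (Fin n) ℝ) (c : ℝ) (i j : Fin n) :
    ∑ k, ∑ l, M k l * (c * ((if i = k then (1:ℝ) else 0) * (if j = l then 1 else 0)
      - (if i = l then 1 else 0) * (if j = k then 1 else 0)))
    = c * (M i j - M j i) := by
  have h1 : ∀ k l : Fin n, M k l * (c * ((if i = k then (1:ℝ) else 0) * (if j = l then 1 else 0)
      - (if i = l then 1 else 0) * (if j = k then 1 else 0)))
      = (if i = k then (if j = l then c * M k l else 0) else 0)
        - (if j = k then (if i = l then c * M k l else 0) else 0) := by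
    intro k l; split_ifs <;> ring
  simp only [h1, Finset.sum_sub_distrib]
  simp [Finset.sum_ite_eq]
  ring

end Stmt7

open Stmt7 in
/-- Every symmetric bilinear form on the space of real skew-symmetric n×n
matrices that is invariant under conjugation by O(n) is a scalar multiple of
the Frobenius inner product tr(Eᵀ E'). -/
theorem stmt_7 (n : ℕ) (hn : 2 ≤ n)
    (f : Matrix (Fin n) (Fin n) ℝ →ₗ[ℝ] Matrix (Fin n) (Fin n) ℝ →ₗ[ℝ] ℝ)
    (hsymm : ∀ E E' : Matrix (Fin n) (Fin n) ℝ,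
      Eᵀ = -E → E'ᵀ = -E' → f E E' = f E' E)
    (hinv : ∀ O : Matrix (Fin n) (Fin n) ℝ,
      O ∈ Matrix.orthogonalGroup (Fin n) ℝ →
      ∀ E E' : Matrix (Fin n) (Fin n) ℝ, Eᵀ = -E → E'ᵀ = -E' →
        f (O * E * O⁻¹) (O * E' * O⁻¹) = f E E') :
    ∃ l : ℝ, ∀ E E' : Matrix (Fin n) (Fin n) ℝ, Eᵀ = -E → E'ᵀ = -E' →
      f E E' = l * (Eᵀ * E').trace := by
  have hz : 0 < n := by omega
  have ho : 1 < n := by omega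
  set z : Fin n := ⟨0, hz⟩ with hzdef
  set o : Fin n := ⟨1, ho⟩ with hodef
  set c : ℝ := f (A z o) (A z o) with hc
  -- invariance under signed-permutation conjugation
  have hconj : ∀ (g : Fin n → ℝ) (σ : Equiv.Perm (Fin n)),
      (∀ a, g a = 1 ∨ g a = -1) →
      ∀ E E' : Matrix (Fin n) (Fin n) ℝ, Eᵀ = -E → E'ᵀ = -E' →
        f (conjM g σ E) (conjM g σ E') = f E E' := by
    intro g σ hg E E' hE hE'
    have h := hinv (OM g σ) (OM_mem g σ hg) E E' hE hE'
    rwa [conj_eq g σ hg, conj_eq g σ hg] at h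
  -- vanishing when an index appears in exactly one pair
  have hzero : ∀ m i j k l : Fin n, ((m = i ∧ m ≠ j) ∨ (m = j ∧ m ≠ i)) →
      m ≠ k → m ≠ l → f (A i j) (A k l) = 0 := by
    intro m i j k l hm hk hl
    have h := hconj (flipg m) 1 (flipg_pm m) (A i j) (A k l) (A_skew i j) (A_skew k l)
    rw [conjM_flip_A_neg m i j hm, conjM_flip_A_fix m k l hk hl] at h
    have h2 : f (-(A i j)) (A k l) = -(f (A i j) (A k l)) := by simp
    rw [h2] at h
    linarith
  -- constancy of the diagonal values
  have hconst : ∀ i j : Fin n, i ≠ j → f (A i j) (A i j) = c := by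
    intro i j hij
    obtain ⟨σ, hσi, hσj⟩ := exists_perm hn i j hij
    have h := hconj 1 σ (fun a => Or.inl rfl) (A z o) (A z o) (A_skew z o) (A_skew z o)
    rw [conjM_perm_A] at h
    have hiz : σ⁻¹ z = i := by
      apply σ.injective
      rw [Equiv.Perm.coe_inv, Equiv.apply_symm_apply, hσi]
    have hjo : σ⁻¹ o = j := by
      apply σ.injective
      rw [Equiv.Perm.coe_inv, Equiv.apply_symm_apply, hσj]
    rw [hiz, hjo] at h
    exact h
  -- the value of f on the basis
  have hA : ∀ i j k l : Fin n, f (A i j) (A k l) =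
      c * ((if i = k then (1:ℝ) else 0) * (if j = l then 1 else 0)
        - (if i = l then 1 else 0) * (if j = k then 1 else 0)) := by
    intro i j k l
    by_cases hij : i = j
    · subst hij
      rw [A_same]
      simp only [map_zero, LinearMap.zero_apply]
      ring
    by_cases hkl : k = l
    · subst hkl
      rw [A_same]
      simp only [map_zero]
      ring
    by_cases hik : i = k
    · by_cases hjl : j = l
      · subst hik; subst hjl
        rw [hconst i j hij]
        simp [hij, Ne.symm hij]
      · have hjk : j ≠ k := fun h => hij (hik.trans h.symm)
        rw [hzero j i j k l (Or.inr ⟨rfl, Ne.symm hij⟩) hjk hjl]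
        simp [hik, hjl, hjk]
    · by_cases hil : i = l
      · by_cases hjk : j = k
        · have hAkl : A k l = -(A i j) := by rw [← hjk, ← hil]; exact A_swap i j
          rw [hAkl]
          have : f (A i j) (-(A i j)) = -(f (A i j) (A i j)) := by simp
          rw [this, hconst i j hij]
          simp [hik, hil, hjk, hkl]
        · have hjl : j ≠ l := fun h => hij (hil.trans h.symm)
          rw [hzero j i j k l (Or.inr ⟨rfl, Ne.symm hij⟩) hjk hjl]
          simp [hik, hjk]
      · rw [hzero i i j k l (Or.inl ⟨rfl, hij⟩) hik hil]
        simp [hik, hil]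
  -- main computation
  refine ⟨c / 2, ?_⟩
  intro E E' hE hE'
  have hE'skew : ∀ a b, E' b a = -E' a b := by
    intro a b
    have := congrFun (congrFun hE' a) b
    simpa [Matrix.transpose_apply] using this
  have htr : (Eᵀ * E').trace = ∑ a, ∑ b, E b a * E' b a := by
    simp [Matrix.trace, Matrix.mul_apply, Matrix.diag]
  have key : (4:ℝ) * f E E' = 2 * c * (Eᵀ * E').trace := by
    have step1 : (4:ℝ) * f E E' = f ((2:ℝ) • E) ((2:ℝ) • E') := by
      simp only [LinearMap.map_smul, LinearMap.smul_apply, smul_eq_mul]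
      ring
    rw [step1, ← decomp hE, ← decomp hE']
    have expand1 : (f (∑ i, ∑ j, E i j • A i j)) (∑ k, ∑ l, E' k l • A k l)
        = ∑ i, ∑ j, E i j * ((f (A i j)) (∑ k, ∑ l, E' k l • A k l)) := by
      rw [map_sum f _ Finset.univ, LinearMap.sum_apply]
      refine Finset.sum_congr rfl fun i _ => ?_
      rw [map_sum f _ Finset.univ, LinearMap.sum_apply]
      refine Finset.sum_congr rfl fun j _ => ?_
      rw [LinearMap.map_smul, LinearMap.smul_apply, smul_eq_mul]
    have expand2 : ∀ i j : Fin n, (f (A i j)) (∑ k, ∑ l, E' k l • A k l)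
        = c * (E' i j - E' j i) := by
      intro i j
      rw [map_sum]
      rw [Finset.sum_congr rfl fun k _ => map_sum (f (A i j)) _ Finset.univ]
      rw [Finset.sum_congr rfl fun k _ => Finset.sum_congr rfl fun l _ =>
        (by rw [LinearMap.map_smul, smul_eq_mul, hA] : (f (A i j)) (E' k l • A k l)
          = E' k l * (c * ((if i = k then (1:ℝ) else 0) * (if j = l then 1 else 0)
            - (if i = l then 1 else 0) * (if j = k then 1 else 0))))]
      exact collapse E' c i j
    rw [expand1]
    simp only [expand2]
    have h2 : ∀ i j : Fin n, E i j * (c * (E' i j - E' j i)) = 2 * (c * (E i j * E' i j)) := by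
      intro i j; rw [hE'skew i j]; ring
    simp only [h2, ← Finset.mul_sum]
    rw [htr, Finset.sum_comm]
    ring
  rw [show c / 2 * (Eᵀ * E').trace = (2 * c * (Eᵀ * E').trace) / 4 by ring, ← key]
  ring
end

section
/- Every symmetric bilinear form on the space of trace-free symmetric n×n matrices that is invariant under conjugation by O(n) is a scalar multiple of the Frobenius inner product tr(E E'). -/
open Matrix

section Stmt8Aux

variable {n : ℕ}

lemma stmt8_exists_perm_pair {α : Type*} [DecidableEq α] {a b c d : α} (hab : a ≠ b)
    (hcd : c ≠ d) : ∃ σ : Equiv.Perm α, σ a = c ∧ σ b = d := by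
  refine ⟨Equiv.trans (Equiv.swap a c) (Equiv.swap (Equiv.swap a c b) d), ?_, ?_⟩
  · have h1 : Equiv.swap a c b ≠ c := by
      intro h
      exact hab ((Equiv.swap a c).injective (h.trans (Equiv.swap_apply_left a c).symm)).symm
    simp only [Equiv.trans_apply, Equiv.swap_apply_left]
    exact Equiv.swap_apply_of_ne_of_ne (Ne.symm h1) hcd
  · simp [Equiv.trans_apply]

-- permutation matrix lemmas
lemma stmt8_perm_star (σ : Equiv.Perm (Fin n)) :
    star (σ.permMatrix ℝ) = (σ⁻¹).permMatrix ℝ := by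
  have : star (σ.permMatrix ℝ) = (σ.permMatrix ℝ)ᵀ := by
    rw [Matrix.star_eq_conjTranspose, Matrix.conjTranspose_eq_transpose_of_trivial]
  rw [this, ← PEquiv.toMatrix_symm, ← Equiv.toPEquiv_symm]
  rfl

lemma stmt8_perm_mul (σ : Equiv.Perm (Fin n)) :
    σ.permMatrix ℝ * (σ⁻¹).permMatrix ℝ = 1 := by
  rw [show (σ.permMatrix ℝ : Matrix (Fin n) (Fin n) ℝ) = σ.toPEquiv.toMatrix from rfl,
    show ((σ⁻¹).permMatrix ℝ : Matrix (Fin n) (Fin n) ℝ) = (σ⁻¹).toPEquiv.toMatrix from rfl,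
    ← PEquiv.toMatrix_trans, ← Equiv.toPEquiv_trans]
  rw [show (σ.trans σ⁻¹) = Equiv.refl (Fin n) from Equiv.ext (by simp),
    Equiv.toPEquiv_refl, PEquiv.toMatrix_refl]

lemma stmt8_perm_mem (σ : Equiv.Perm (Fin n)) :
    σ.permMatrix ℝ ∈ Matrix.orthogonalGroup (Fin n) ℝ := by
  rw [Matrix.mem_orthogonalGroup_iff, ← Matrix.conjTranspose_eq_transpose_of_trivial,
    ← Matrix.star_eq_conjTranspose, stmt8_perm_star, stmt8_perm_mul]

lemma stmt8_perm_inv (σ : Equiv.Perm (Fin n)) :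
    (σ.permMatrix ℝ)⁻¹ = (σ⁻¹).permMatrix ℝ :=
  Matrix.inv_eq_right_inv (stmt8_perm_mul σ)

lemma stmt8_perm_conj (σ : Equiv.Perm (Fin n)) (v : Fin n → ℝ) :
    σ.permMatrix ℝ * diagonal v * (σ.permMatrix ℝ)⁻¹ = diagonal (v ∘ σ) := by
  rw [stmt8_perm_inv]
  rw [show (σ.permMatrix ℝ : Matrix (Fin n) (Fin n) ℝ) = σ.toPEquiv.toMatrix from rfl,
    show ((σ⁻¹).permMatrix ℝ : Matrix (Fin n) (Fin n) ℝ) = (σ⁻¹).toPEquiv.toMatrix from rfl,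
    PEquiv.toMatrix_toPEquiv_mul, PEquiv.mul_toMatrix_toPEquiv,
    Matrix.submatrix_submatrix]
  rw [show ⇑(σ⁻¹ : Equiv.Perm (Fin n)).symm = ⇑σ from rfl]
  simpa using Matrix.submatrix_diagonal_equiv v σ

end Stmt8Aux

/-- Every symmetric bilinear form on the space of trace-free symmetric n×n
matrices that is invariant under conjugation by O(n) is a scalar multiple of
the Frobenius inner product tr(E E'). -/
theorem stmt_8 (n : ℕ) (hn : 2 ≤ n)
    (f : Matrix (Fin n) (Fin n) ℝ →ₗ[ℝ] Matrix (Fin n) (Fin n) ℝ →ₗ[ℝ] ℝ)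
    (hsymm : ∀ E E' : Matrix (Fin n) (Fin n) ℝ,
      Eᵀ = E → E.trace = 0 → E'ᵀ = E' → E'.trace = 0 → f E E' = f E' E)
    (hinv : ∀ O : Matrix (Fin n) (Fin n) ℝ,
      O ∈ Matrix.orthogonalGroup (Fin n) ℝ →
      ∀ E E' : Matrix (Fin n) (Fin n) ℝ,
        Eᵀ = E → E.trace = 0 → E'ᵀ = E' → E'.trace = 0 →
        f (O * E * O⁻¹) (O * E' * O⁻¹) = f E E') :
    ∃ l : ℝ, ∀ E E' : Matrix (Fin n) (Fin n) ℝ,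
      Eᵀ = E → E.trace = 0 → E'ᵀ = E' → E'.trace = 0 →
      f E E' = l * (E * E').trace := by
  -- basic indices
  set i0 : Fin n := ⟨0, by omega⟩ with hi0
  set i1 : Fin n := ⟨1, by omega⟩ with hi1
  have hi01 : i1 ≠ i0 := by simp [hi0, hi1, Fin.ext_iff]
  -- the basic trace-free vectors
  set u : Fin n → Fin n → (Fin n → ℝ) :=
    fun i j => Pi.single i 1 - Pi.single j 1 with hu
  have husum : ∀ i j, ∑ x, u i j x = 0 := by
    intro i j
    simp [hu, Finset.sum_sub_distrib]
  -- permutation invariance for diagonal matrices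
  have Hperm : ∀ (σ : Equiv.Perm (Fin n)) (v w : Fin n → ℝ), (∑ x, v x) = 0 →
      (∑ x, w x) = 0 →
      f (diagonal (v ∘ σ)) (diagonal (w ∘ σ)) = f (diagonal v) (diagonal w) := by
    intro σ v w hv hw
    have := hinv (σ.permMatrix ℝ) (stmt8_perm_mem σ) (diagonal v) (diagonal w)
      (Matrix.diagonal_transpose v) (by rwa [Matrix.trace_diagonal])
      (Matrix.diagonal_transpose w) (by rwa [Matrix.trace_diagonal])
    rwa [stmt8_perm_conj, stmt8_perm_conj] at this
  -- invariance of the G function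
  have hucomp : ∀ (σ : Equiv.Perm (Fin n)) (i j : Fin n), u (σ i) (σ j) = u i j ∘ ⇑(σ⁻¹) := by
    intro σ i j
    funext x
    simp only [hu, Pi.sub_apply, Function.comp_apply, Pi.single_apply]
    simp [Equiv.Perm.inv_eq_iff_eq, Equiv.symm_apply_eq]
  have HG : ∀ (σ : Equiv.Perm (Fin n)) (i j k l : Fin n),
      f (diagonal (u (σ i) (σ j))) (diagonal (u (σ k) (σ l)))
        = f (diagonal (u i j)) (diagonal (u k l)) := by
    intro σ i j k l
    rw [hucomp, hucomp]
    exact Hperm σ⁻¹ (u i j) (u k l) (husum i j) (husum k l)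
  -- the constant
  set l : ℝ := f (diagonal (u i1 i0)) (diagonal (u i1 i0)) / 2 with hl
  -- dot products of the basis vectors
  have hdot : ∀ i j k m : Fin n, ∑ x, u i j x * u k m x
      = (if i = k then (1:ℝ) else 0) - (if i = m then 1 else 0)
        - (if j = k then 1 else 0) + (if j = m then 1 else 0) := by
    intro i j k m
    have : ∀ x, u i j x * u k m x
        = ((if x = i then (1:ℝ) else 0) * (if x = k then 1 else 0)
            - (if x = i then 1 else 0) * (if x = m then 1 else 0))
          - ((if x = j then 1 else 0) * (if x = k then 1 else 0)
            - (if x = j then 1 else 0) * (if x = m then 1 else 0)) := by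
      intro x
      simp only [hu, Pi.sub_apply, Pi.single_apply]
      ring
    rw [Finset.sum_congr rfl fun x _ => this x]
    simp only [Finset.sum_sub_distrib, ite_mul, one_mul, zero_mul]
    simp [Finset.sum_ite_eq, eq_comm]
    ring
  -- the "A = 2l" fact
  have hA : ∀ i : Fin n, i ≠ i0 →
      f (diagonal (u i i0)) (diagonal (u i i0)) = 2 * l := by
    intro i hi
    obtain ⟨σ, h1, h2⟩ := stmt8_exists_perm_pair hi hi01
    have := HG σ i i0 i i0
    rw [h1, h2] at this
    rw [← this, hl]
    ring
  -- step i: values on basis vectors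
  have key : ∀ i k : Fin n, f (diagonal (u i i0)) (diagonal (u k i0))
      = l * ∑ x, u i i0 x * u k i0 x := by
    intro i k
    by_cases hii : i = i0
    · subst hii
      rw [show u i0 i0 = 0 from sub_self _,
        show diagonal (0 : Fin n → ℝ) = 0 from Matrix.diagonal_zero]
      simp
    by_cases hkk : k = i0
    · subst hkk
      rw [show u i0 i0 = 0 from sub_self _,
        show diagonal (0 : Fin n → ℝ) = 0 from Matrix.diagonal_zero]
      simp
    rw [hdot]
    by_cases hik : i = k
    · subst hik
      rw [hA i hii, if_pos rfl, if_neg hii,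
        if_neg (show ¬ i0 = i from fun h => hii h.symm), if_pos rfl]
      ring
    · -- the off-diagonal case
      have huik : u i k = u i i0 - u k i0 := by
        funext x
        simp only [hu, Pi.sub_apply]
        ring
      have e1 : f (diagonal (u i k)) (diagonal (u i k))
          = f (diagonal (u i i0)) (diagonal (u i i0))
            - f (diagonal (u i i0)) (diagonal (u k i0))
            - f (diagonal (u k i0)) (diagonal (u i i0))
            + f (diagonal (u k i0)) (diagonal (u k i0)) := by
        have hds : diagonal (u i i0 - u k i0) = diagonal (u i i0) - diagonal (u k i0) := by
          ext a b
          by_cases hab : a = b <;> simp [Matrix.diagonal_apply, hab]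
        rw [huik, hds]
        simp only [map_sub, LinearMap.sub_apply]
        ring
      obtain ⟨σ, h1, h2⟩ := stmt8_exists_perm_pair hik hi01
      have e2 := HG σ i k i k
      rw [h1, h2] at e2
      have e3 := hA i hii
      have e5 := hA k hkk
      have e4 : f (diagonal (u k i0)) (diagonal (u i i0))
          = f (diagonal (u i i0)) (diagonal (u k i0)) :=
        hsymm _ _ (Matrix.diagonal_transpose _) (by rw [Matrix.trace_diagonal]; exact husum k i0)
          (Matrix.diagonal_transpose _) (by rw [Matrix.trace_diagonal]; exact husum i i0)
      have e6 : (2:ℝ) * l = f (diagonal (u i1 i0)) (diagonal (u i1 i0)) := by rw [hl]; ring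
      rw [e2, e1, e3, e4, e5] at e6
      rw [if_neg hik, if_neg hii, if_neg (show ¬ i0 = k from fun h => hkk h.symm),
        if_pos rfl]
      linarith
  -- step ii: diagonal case
  have hrep : ∀ v : Fin n → ℝ, (∑ x, v x) = 0 → ∀ x, v x = ∑ i, v i * u i i0 x := by
    intro v hv x
    simp only [hu, Pi.sub_apply, Pi.single_apply, mul_sub, mul_ite, mul_one, mul_zero,
      Finset.sum_sub_distrib, Finset.sum_ite_eq, Finset.mem_univ, if_true]
    by_cases hx : x = i0 <;> simp [hx, hv]
  have diag_case : ∀ v w : Fin n → ℝ, (∑ x, v x) = 0 → (∑ x, w x) = 0 →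
      f (diagonal v) (diagonal w) = l * ∑ x, v x * w x := by
    intro v w hv hw
    have hdiag_sum : ∀ c : Fin n → (Fin n → ℝ),
        diagonal (fun x => ∑ i, c i x) = ∑ i, diagonal (c i) := by
      intro c
      ext a b
      by_cases hab : a = b <;> simp [Matrix.diagonal_apply, hab, Matrix.sum_apply]
    have hvdec : ∀ v : Fin n → ℝ, (∑ x, v x) = 0 →
        diagonal v = ∑ i, v i • diagonal (u i i0) := by
      intro v hv
      conv_lhs => rw [show v = (fun x => ∑ i, v i * u i i0 x) from funext (hrep v hv)]
      rw [hdiag_sum]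
      refine Finset.sum_congr rfl fun i _ => ?_
      rw [← Matrix.diagonal_smul]
      rfl
    have dot_expand : ∑ x, v x * w x
        = ∑ i, ∑ k, v i * (w k * ∑ x, u i i0 x * u k i0 x) := by
      calc ∑ x, v x * w x = ∑ x, ∑ i, ∑ k, (v i * u i i0 x) * (w k * u k i0 x) := by
            refine Finset.sum_congr rfl fun x _ => ?_
            rw [hrep v hv x, hrep w hw x, Finset.sum_mul_sum]
          _ = ∑ i, ∑ k, ∑ x, (v i * u i i0 x) * (w k * u k i0 x) := by
            rw [Finset.sum_comm]
            exact Finset.sum_congr rfl fun i _ => Finset.sum_comm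
          _ = ∑ i, ∑ k, v i * (w k * ∑ x, u i i0 x * u k i0 x) := by
            refine Finset.sum_congr rfl fun i _ => Finset.sum_congr rfl fun k _ => ?_
            conv_rhs => rw [Finset.mul_sum]
            rw [Finset.mul_sum]
            exact Finset.sum_congr rfl fun x _ => by ring
    rw [hvdec v hv, hvdec w hw]
    simp only [map_sum, LinearMap.sum_apply, _root_.map_smul, LinearMap.smul_apply, smul_eq_mul]
    simp only [key]
    rw [dot_expand, Finset.mul_sum]
    simp only [Finset.mul_sum]
    rw [Finset.sum_comm]
    exact Finset.sum_congr rfl fun i _ => Finset.sum_congr rfl fun k _ =>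
      Finset.sum_congr rfl fun x _ => by ring
  -- step iii: quadratic case
  have quad : ∀ E : Matrix (Fin n) (Fin n) ℝ, Eᵀ = E → E.trace = 0 →
      f E E = l * (E * E).trace := by
    intro E hE hEt
    have hherm : E.IsHermitian := by
      show Eᴴ = E
      rw [Matrix.conjTranspose_eq_transpose_of_trivial, hE]
    set U : Matrix (Fin n) (Fin n) ℝ := (hherm.eigenvectorUnitary : Matrix (Fin n) (Fin n) ℝ)
      with hU
    set d : Fin n → ℝ := hherm.eigenvalues with hd
    have hofd : (RCLike.ofReal ∘ hherm.eigenvalues : Fin n → ℝ) = d := by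
      funext x
      simp [RCLike.ofReal_real_eq_id, hd]
    have hUmem : U ∈ Matrix.orthogonalGroup (Fin n) ℝ := hherm.eigenvectorUnitary.2
    have hUU : U * star U = 1 := Matrix.mem_unitaryGroup_iff.mp hUmem
    have hsUU : star U * U = 1 := Matrix.mem_unitaryGroup_iff'.mp hUmem
    have hUinv : U⁻¹ = star U := Matrix.inv_eq_right_inv hUU
    have hdiag : star U * E * U = diagonal d := by
      rw [← hofd]
      have h := hherm.conjStarAlgAut_star_eigenvectorUnitary
      rw [Unitary.conjStarAlgAut_apply, Unitary.coe_star, star_star] at h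
      exact h
    have hspec : E = U * diagonal d * star U := by
      rw [← hofd]
      exact hherm.spectral_theorem
    have hdt : ∑ x, d x = 0 := by
      have : (diagonal d).trace = 0 := by
        rw [← hdiag, Matrix.trace_mul_cycle, hUU, Matrix.one_mul, hEt]
      rwa [Matrix.trace_diagonal] at this
    have hconj := hinv U hUmem (diagonal d) (diagonal d)
      (Matrix.diagonal_transpose d) (by rw [Matrix.trace_diagonal]; exact hdt)
      (Matrix.diagonal_transpose d) (by rw [Matrix.trace_diagonal]; exact hdt)
    rw [hUinv, ← hspec] at hconj
    have htr : (E * E).trace = ∑ x, d x * d x := by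
      have hEE : E * E = U * (diagonal d * diagonal d) * star U := by
        rw [hspec]
        calc U * diagonal d * star U * (U * diagonal d * star U)
            = U * diagonal d * (star U * U) * diagonal d * star U := by
              simp only [Matrix.mul_assoc]
          _ = U * (diagonal d * diagonal d) * star U := by
              rw [hsUU]
              simp only [Matrix.mul_assoc, Matrix.one_mul]
      rw [hEE, Matrix.trace_mul_cycle, ← Matrix.mul_assoc, hsUU, Matrix.one_mul,
        Matrix.diagonal_mul_diagonal, Matrix.trace_diagonal]
    rw [hconj, diag_case d d hdt hdt, htr]
  -- step iv: polarization
  refine ⟨l, fun E E' hE hEt hE' hE't => ?_⟩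
  have hsum : (E + E')ᵀ = E + E' := by rw [Matrix.transpose_add, hE, hE']
  have hsumt : (E + E').trace = 0 := by rw [Matrix.trace_add, hEt, hE't, add_zero]
  have expand : f (E + E') (E + E') = f E E + f E E' + (f E' E + f E' E') := by
    simp only [map_add, LinearMap.add_apply]
    ring
  have hEE' : f E' E = f E E' := hsymm E' E hE' hE't hE hEt
  have q1 := quad E hE hEt
  have q2 := quad E' hE' hE't
  have q3 := quad (E + E') hsum hsumt
  have tr_expand : ((E + E') * (E + E')).trace
      = (E * E).trace + 2 * (E * E').trace + (E' * E').trace := by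
    rw [Matrix.add_mul, Matrix.mul_add, Matrix.mul_add, Matrix.trace_add, Matrix.trace_add,
      Matrix.trace_add, Matrix.trace_mul_comm E' E]
    ring
  rw [expand, hEE', q1, q2, tr_expand] at q3
  linarith
end

section
/- The subspaces span{Id}, Sym₀ (trace-free symmetric matrices), and Skew (skew-symmetric matrices) of the n×n real matrices are irreducible under the conjugation action of O(n): their only O(n)-invariant linear subspaces are {0} and themselves. -/
open Matrix

namespace Stmt9

variable {n : ℕ}

abbrev e (i j : Fin n) : Matrix (Fin n) (Fin n) ℝ := Matrix.single i j 1

lemma e_transpose (i j : Fin n) : (e i j)ᵀ = e j i := by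
  ext a b
  simp only [transpose_apply, Matrix.single, of_apply]
  by_cases h1 : i = b <;> by_cases h2 : j = a <;> simp [h1, h2]

lemma e_mul_mul (i j k l : Fin n) (A : Matrix (Fin n) (Fin n) ℝ) :
    e i j * A * e k l = (A j k) • e i l := by
  ext a b
  by_cases ha : a = i <;> by_cases hb : b = l <;>
    simp [ha, hb, Matrix.single_apply_of_ne, -Matrix.smul_apply] <;>
    (rw [Matrix.single_apply_of_ne]; tauto)

lemma star_eq (A : Matrix (Fin n) (Fin n) ℝ) : star A = Aᵀ := by
  rw [star_eq_conjTranspose, conjTranspose_eq_transpose_of_trivial]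

end Stmt9

namespace Stmt9
open Matrix
variable {n : ℕ} {W : Submodule ℝ (Matrix (Fin n) (Fin n) ℝ)}

lemma D_mul_D (i : Fin n) :
    (1 - (2:ℝ)•e i i) * (1 - (2:ℝ)•e i i) = 1 := by
  have h : e i i * e i i = e i i := by
    rw [Matrix.single_mul_single_same]; norm_num
  simp only [sub_mul, mul_sub, one_mul, mul_one, smul_mul_assoc, mul_smul_comm, h, smul_smul]
  module

lemma D_mem (i : Fin n) : (1 - (2:ℝ)•e i i) ∈ Matrix.orthogonalGroup (Fin n) ℝ := by
  rw [Matrix.mem_orthogonalGroup_iff]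
  rw [transpose_sub, transpose_smul, transpose_one, e_transpose]
  exact D_mul_D i

lemma extract
    (hconj : ∀ O : Matrix (Fin n) (Fin n) ℝ, O ∈ Matrix.orthogonalGroup (Fin n) ℝ →
      ∀ E ∈ W, O * E * O⁻¹ ∈ W)
    {A : Matrix (Fin n) (Fin n) ℝ} (hA : A ∈ W) {k l : Fin n} (hkl : k ≠ l) :
    (A k l) • e k l + (A l k) • e l k ∈ W := by
  set d : Matrix (Fin n) (Fin n) ℝ := (2:ℝ)•e k k with hd
  set d' : Matrix (Fin n) (Fin n) ℝ := (2:ℝ)•e l l with hd'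
  have hinv : (1 - d)⁻¹ = 1 - d := Matrix.inv_eq_right_inv (D_mul_D k)
  have hinv' : (1 - d')⁻¹ = 1 - d' := Matrix.inv_eq_right_inv (D_mul_D l)
  have hXmem : A - (1 - d) * A * (1 - d) ∈ W := by
    have := hconj _ (D_mem k) A hA
    rw [hinv] at this
    exact W.sub_mem hA this
  set X : Matrix (Fin n) (Fin n) ℝ := A - (1 - d) * A * (1 - d) with hXdef
  have hYmem : X - (1 - d') * X * (1 - d') ∈ W := by
    have := hconj _ (D_mem l) X hXmem
    rw [hinv'] at this
    exact W.sub_mem hXmem this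
  have h1 : ∀ B : Matrix (Fin n) (Fin n) ℝ, e l l * (e k k * B) = 0 := by
    intro B; rw [← mul_assoc, Matrix.single_mul_single_of_ne (h := hkl.symm), zero_mul]
  have h2 : ∀ B : Matrix (Fin n) (Fin n) ℝ, e k k * (e l l * B) = 0 := by
    intro B; rw [← mul_assoc, Matrix.single_mul_single_of_ne (h := hkl), zero_mul]
  have h1' : ∀ B : Matrix (Fin n) (Fin n) ℝ, B * e l l * e k k = 0 := by
    intro B; rw [mul_assoc, Matrix.single_mul_single_of_ne (h := hkl.symm), mul_zero]
  have h2' : ∀ B : Matrix (Fin n) (Fin n) ℝ, B * e k k * e l l = 0 := by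
    intro B; rw [mul_assoc, Matrix.single_mul_single_of_ne (h := hkl), mul_zero]
  have h3 : e k k * (A * e l l) = A k l • e k l := by
    rw [← mul_assoc]; exact e_mul_mul k k l l A
  have h4 : e l l * (A * e k k) = A l k • e l k := by
    rw [← mul_assoc]; exact e_mul_mul l l k k A
  have hz1 : e l l * e k k = (0 : Matrix (Fin n) (Fin n) ℝ) := by
    rw [Matrix.single_mul_single_of_ne (h := hkl.symm)]
  have hz2 : e k k * e l l = (0 : Matrix (Fin n) (Fin n) ℝ) := by
    rw [Matrix.single_mul_single_of_ne (h := hkl)]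
  have hid : X - (1 - d') * X * (1 - d') =
      (4:ℝ) • ((A k l) • e k l + (A l k) • e l k) := by
    have hz3 : e l k * e l l = (0 : Matrix (Fin n) (Fin n) ℝ) := by
      rw [Matrix.single_mul_single_of_ne (h := hkl)]
    have hz4 : e k l * e k k = (0 : Matrix (Fin n) (Fin n) ℝ) := by
      rw [Matrix.single_mul_single_of_ne (h := hkl.symm)]
    have h5 : X = d * A + A * d - d * A * d := by rw [hXdef]; noncomm_ring
    have h6 : X - (1 - d') * X * (1 - d') = d' * X + X * d' - d' * X * d' := by
      noncomm_ring
    rw [h6, h5, hd, hd']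
    simp only [mul_add, add_mul, mul_sub, sub_mul, smul_mul_assoc, mul_smul_comm,
      smul_smul, ← mul_assoc, hz1, hz2, zero_mul, mul_zero, smul_zero, e_mul_mul, h1', h2', hz3, hz4]
    module
  rw [hid] at hYmem
  have := W.smul_mem (4:ℝ)⁻¹ hYmem
  rwa [smul_smul, inv_mul_cancel₀ (by norm_num), one_smul] at this

end Stmt9

namespace Stmt9
open Matrix
variable {n : ℕ} {W : Submodule ℝ (Matrix (Fin n) (Fin n) ℝ)}

lemma perm_mul_perm_symm (σ : Equiv.Perm (Fin n)) :
    (σ.toPEquiv.toMatrix : Matrix (Fin n) (Fin n) ℝ) * σ.symm.toPEquiv.toMatrix = 1 := by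
  rw [← PEquiv.toMatrix_trans, ← Equiv.toPEquiv_trans, Equiv.self_trans_symm,
    Equiv.toPEquiv_refl, PEquiv.toMatrix_refl]

lemma perm_mem (σ : Equiv.Perm (Fin n)) :
    (σ.toPEquiv.toMatrix : Matrix (Fin n) (Fin n) ℝ) ∈ Matrix.orthogonalGroup (Fin n) ℝ := by
  rw [Matrix.mem_orthogonalGroup_iff, ← PEquiv.toMatrix_symm, ← Equiv.toPEquiv_symm]
  exact perm_mul_perm_symm σ

lemma perm_conj (σ : Equiv.Perm (Fin n)) (A : Matrix (Fin n) (Fin n) ℝ) :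
    (σ.toPEquiv.toMatrix : Matrix (Fin n) (Fin n) ℝ) * A * (σ.toPEquiv.toMatrix)⁻¹ =
      A.submatrix σ σ := by
  rw [Matrix.inv_eq_right_inv (perm_mul_perm_symm σ), PEquiv.toMatrix_toPEquiv_mul,
    PEquiv.mul_toMatrix_toPEquiv, Matrix.submatrix_submatrix]
  simp

lemma exists_perm {i j k l : Fin n} (hij : i ≠ j) (hkl : k ≠ l) :
    ∃ σ : Equiv.Perm (Fin n), σ k = i ∧ σ l = j := by
  classical
  set σ1 := Equiv.swap k i with hσ1
  set j' := σ1 l with hj'def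
  have h1 : σ1 k = i := Equiv.swap_apply_left k i
  have hj'i : j' ≠ i := by
    rw [hj'def, ← h1]
    exact fun h => hkl.symm (σ1.injective h)
  set σ2 := Equiv.swap j' j with hσ2
  refine ⟨σ1.trans σ2, ?_, ?_⟩
  · simp only [Equiv.trans_apply, h1]
    exact Equiv.swap_apply_of_ne_of_ne hj'i.symm hij
  · simp only [Equiv.trans_apply, ← hj'def]
    exact Equiv.swap_apply_left j' j

lemma move
    (hconj : ∀ O : Matrix (Fin n) (Fin n) ℝ, O ∈ Matrix.orthogonalGroup (Fin n) ℝ →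
      ∀ E ∈ W, O * E * O⁻¹ ∈ W)
    {A : Matrix (Fin n) (Fin n) ℝ} (hA : A ∈ W) {i j k l : Fin n}
    (hij : i ≠ j) (hkl : k ≠ l) :
    ∃ C ∈ W, C k l = A i j ∧ C l k = A j i := by
  obtain ⟨σ, hk, hl⟩ := exists_perm hij hkl
  refine ⟨A.submatrix σ σ, ?_, ?_, ?_⟩
  · rw [← perm_conj]; exact hconj _ (perm_mem σ) A hA
  · rw [Matrix.submatrix_apply, hk, hl]
  · rw [Matrix.submatrix_apply, hk, hl]

end Stmt9

namespace Stmt9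
open Matrix
variable {n : ℕ} {W : Submodule ℝ (Matrix (Fin n) (Fin n) ℝ)}

lemma e_mul_e (a b c d : Fin n) :
    e a b * e c d = if b = c then e a d else (0 : Matrix (Fin n) (Fin n) ℝ) := by
  by_cases h : b = c
  · subst h; rw [if_pos rfl, Matrix.single_mul_single_same, one_mul]
  · rw [if_neg h, Matrix.single_mul_single_of_ne (h := h)]

noncomputable def rr : ℝ := (Real.sqrt 2)⁻¹

lemma rr_mul_rr : rr * rr = 1/2 := by
  rw [rr, ← mul_inv, Real.mul_self_sqrt (by norm_num)]
  norm_num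

lemma rr_ne_zero : rr ≠ 0 := by
  rw [rr]
  positivity

noncomputable def H (i j : Fin n) : Matrix (Fin n) (Fin n) ℝ :=
  1 - e i i - e j j + rr • (e i i + e i j + e j i - e j j)

lemma H_mul_H {i j : Fin n} (hij : i ≠ j) : H i j * H i j = 1 := by
  rw [H]
  simp only [mul_add, add_mul, mul_sub, sub_mul, mul_one, one_mul, smul_mul_assoc,
    mul_smul_comm, smul_smul, e_mul_e, if_true, hij, hij.symm, if_false, if_neg,
    smul_add, smul_sub, smul_zero, rr_mul_rr]
  module

end Stmt9

namespace Stmt9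
open Matrix
variable {n : ℕ} {W : Submodule ℝ (Matrix (Fin n) (Fin n) ℝ)}

lemma H_transpose (i j : Fin n) : (H i j)ᵀ = H i j := by
  simp only [H, transpose_add, transpose_sub, transpose_one, transpose_smul,
    e_transpose]
  module

lemma H_mem {i j : Fin n} (hij : i ≠ j) : H i j ∈ Matrix.orthogonalGroup (Fin n) ℝ := by
  rw [Matrix.mem_orthogonalGroup_iff, H_transpose]
  exact H_mul_H hij

lemma H_inv {i j : Fin n} (hij : i ≠ j) : (H i j)⁻¹ = H i j :=
  Matrix.inv_eq_right_inv (H_mul_H hij)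

lemma H_conj_S {i j : Fin n} (hij : i ≠ j) :
    H i j * (e i j + e j i) * H i j = e i i - e j j := by
  rw [H]
  simp only [mul_add, add_mul, mul_sub, sub_mul, mul_one, one_mul, smul_mul_assoc,
    mul_smul_comm, smul_smul, e_mul_e, if_true, hij, hij.symm, if_false, if_neg,
    smul_add, smul_sub, smul_zero, rr_mul_rr]
  try simp only [if_pos rfl, hij, hij.symm, if_false, smul_zero]
  module

lemma eii_mul_H {i j : Fin n} (hij : i ≠ j) : e i i * H i j = rr • (e i i + e i j) := by
  rw [H]
  simp only [mul_add, add_mul, mul_sub, sub_mul, mul_one, one_mul, smul_mul_assoc,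
    mul_smul_comm, smul_smul, e_mul_e, if_true, hij, hij.symm, if_false, if_neg,
    smul_add, smul_sub, smul_zero, rr_mul_rr]
  try simp only [if_pos rfl, hij, hij.symm, if_false, smul_zero]
  module

lemma H_mul_ejj {i j : Fin n} (hij : i ≠ j) : H i j * e j j = rr • (e i j - e j j) := by
  rw [H]
  simp only [mul_add, add_mul, mul_sub, sub_mul, mul_one, one_mul, smul_mul_assoc,
    mul_smul_comm, smul_smul, e_mul_e, if_true, hij, hij.symm, if_false, if_neg,
    smul_add, smul_sub, smul_zero, rr_mul_rr]
  try simp only [if_pos rfl, hij, hij.symm, if_false, smul_zero]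
  module

lemma ejj_mul_H {i j : Fin n} (hij : i ≠ j) : e j j * H i j = rr • (e j i - e j j) := by
  rw [H]
  simp only [mul_add, add_mul, mul_sub, sub_mul, mul_one, one_mul, smul_mul_assoc,
    mul_smul_comm, smul_smul, e_mul_e, if_true, hij, hij.symm, if_false, if_neg,
    smul_add, smul_sub, smul_zero, rr_mul_rr]
  try simp only [if_pos rfl, hij, hij.symm, if_false, smul_zero]
  module

lemma H_mul_eii {i j : Fin n} (hij : i ≠ j) : H i j * e i i = rr • (e i i + e j i) := by
  rw [H]
  simp only [mul_add, add_mul, mul_sub, sub_mul, mul_one, one_mul, smul_mul_assoc,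
    mul_smul_comm, smul_smul, e_mul_e, if_true, hij, hij.symm, if_false, if_neg,
    smul_add, smul_sub, smul_zero, rr_mul_rr]
  try simp only [if_pos rfl, hij, hij.symm, if_false, smul_zero]
  module

lemma entry_of {i j : Fin n} (M : Matrix (Fin n) (Fin n) ℝ) (c : ℝ)
    (h : e i i * M * e j j = c • e i j) : M i j = c := by
  rw [e_mul_mul] at h
  have h2 := congrFun (congrFun h i) j
  simpa using h2

end Stmt9

namespace Stmt9
open Matrix
variable {n : ℕ} {W : Submodule ℝ (Matrix (Fin n) (Fin n) ℝ)}

lemma H_entry_ij {i j : Fin n} (hij : i ≠ j) (A : Matrix (Fin n) (Fin n) ℝ)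
    (h1 : A i j = 0) (h2 : A j i = 0) :
    (H i j * A * H i j) i j = rr * rr * (A i i - A j j) := by
  apply entry_of
  have hassoc : e i i * (H i j * A * H i j) * e j j
      = (e i i * H i j) * A * (H i j * e j j) := by noncomm_ring
  rw [hassoc, eii_mul_H hij, H_mul_ejj hij]
  simp only [smul_mul_assoc, mul_smul_comm, add_mul, mul_add, mul_sub, sub_mul,
    smul_smul, smul_add, smul_sub, e_mul_mul, h1, h2, zero_smul, smul_zero]
  module

lemma H_entry_ji {i j : Fin n} (hij : i ≠ j) (A : Matrix (Fin n) (Fin n) ℝ)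
    (h1 : A i j = 0) (h2 : A j i = 0) :
    (H i j * A * H i j) j i = rr * rr * (A i i - A j j) := by
  apply entry_of
  have hassoc : e j j * (H i j * A * H i j) * e i i
      = (e j j * H i j) * A * (H i j * e i i) := by noncomm_ring
  rw [hassoc, ejj_mul_H hij, H_mul_eii hij]
  simp only [smul_mul_assoc, mul_smul_comm, add_mul, mul_add, mul_sub, sub_mul,
    smul_smul, smul_add, smul_sub, e_mul_mul, h1, h2, zero_smul, smul_zero]
  module

lemma sum_entry (c : Fin n → Fin n → ℝ) (a b : Fin n) :
    (∑ k : Fin n, ∑ l : Fin n, c k l • e k l) a b = c a b := by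
  simp only [Matrix.sum_apply, Matrix.smul_apply, Matrix.single, of_apply, smul_eq_mul,
    mul_ite, mul_one, mul_zero, ite_and]
  rw [Finset.sum_comm]
  rw [Finset.sum_eq_single b]
  · rw [Finset.sum_eq_single a] <;> simp +contextual [eq_comm]
  · intro x _ hx
    apply Finset.sum_eq_zero
    intro k _
    simp [hx, fun h : x = b => hx h, eq_comm, Ne.symm hx]
  · simp

end Stmt9

namespace Stmt9
open Matrix
variable {n : ℕ} {W : Submodule ℝ (Matrix (Fin n) (Fin n) ℝ)}

lemma skew_span (hF : ∀ k l : Fin n, k ≠ l → e k l - e l k ∈ W)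
    {E : Matrix (Fin n) (Fin n) ℝ} (hE : Eᵀ = -E) : E ∈ W := by
  have key : E = ∑ k : Fin n, ∑ l : Fin n, ((1/2 : ℝ) * E k l) • (e k l - e l k) := by
    have hsplit : (∑ k : Fin n, ∑ l : Fin n, ((1/2 : ℝ) * E k l) • (e k l - e l k))
        = (∑ k : Fin n, ∑ l : Fin n, ((1/2 : ℝ) * E k l) • e k l)
          - (∑ k : Fin n, ∑ l : Fin n, ((1/2 : ℝ) * E k l) • e l k) := by
      simp [smul_sub, Finset.sum_sub_distrib]
    have hcomm : (∑ k : Fin n, ∑ l : Fin n, ((1/2 : ℝ) * E k l) • e l k)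
        = ∑ k : Fin n, ∑ l : Fin n, ((1/2 : ℝ) * E l k) • e k l := Finset.sum_comm
    ext a b
    have hba : E b a = - E a b := by
      have := congrFun (congrFun hE a) b
      simpa [transpose_apply] using this
    rw [hsplit, hcomm, Matrix.sub_apply, sum_entry, sum_entry, hba]
    ring
  rw [key]
  refine Submodule.sum_mem W fun k _ => Submodule.sum_mem W fun l _ => ?_
  by_cases h : k = l
  · subst h; simp
  · exact W.smul_mem _ (hF k l h)

lemma sym_span (hn : 2 ≤ n)
    (hS : ∀ k l : Fin n, k ≠ l → e k l + e l k ∈ W)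
    (hD : ∀ k l : Fin n, k ≠ l → e k k - e l l ∈ W)
    {E : Matrix (Fin n) (Fin n) ℝ} (hE : Eᵀ = E) (htr : E.trace = 0) : E ∈ W := by
  have hnpos : 0 < n := by omega
  set z : Fin n := ⟨0, hnpos⟩ with hz
  have hdiag : ∀ k : Fin n, e k k - e z z ∈ W := by
    intro k
    by_cases h : k = z
    · subst h; simp
    · exact hD k z h
  have htr' : ∑ k : Fin n, E k k = 0 := by
    simpa [Matrix.trace, Matrix.diag] using htr
  have key : E = ∑ k : Fin n, ∑ l : Fin n,
      ((1/2 : ℝ) * E k l) • (e k l + e l k - (if k = l then (2:ℝ) • e z z else 0)) := by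
    have hsplit : (∑ k : Fin n, ∑ l : Fin n,
        ((1/2 : ℝ) * E k l) • (e k l + e l k - (if k = l then (2:ℝ) • e z z else 0)))
        = (∑ k : Fin n, ∑ l : Fin n, ((1/2 : ℝ) * E k l) • e k l)
          + (∑ k : Fin n, ∑ l : Fin n, ((1/2 : ℝ) * E l k) • e k l)
          - (∑ k : Fin n, ∑ l : Fin n,
              ((1/2 : ℝ) * E k l) • (if k = l then (2:ℝ) • e z z else 0)) := by
      rw [show (∑ k : Fin n, ∑ l : Fin n, ((1/2 : ℝ) * E l k) • e k l)
          = ∑ k : Fin n, ∑ l : Fin n, ((1/2 : ℝ) * E k l) • e l k from Finset.sum_comm]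
      simp [smul_sub, smul_add, Finset.sum_sub_distrib, Finset.sum_add_distrib]
    have hlast : (∑ k : Fin n, ∑ l : Fin n,
        ((1/2 : ℝ) * E k l) • (if k = l then (2:ℝ) • e z z else 0))
        = (0 : Matrix (Fin n) (Fin n) ℝ) := by
      have h1 : ∀ k : Fin n, (∑ l : Fin n,
          ((1/2 : ℝ) * E k l) • (if k = l then (2:ℝ) • e z z else 0))
          = (E k k) • e z z := by
        intro k
        rw [Finset.sum_eq_single k]
        · simp [smul_smul]; ring_nf
        · intro x _ hx; simp [Ne.symm hx]
        · simp
      simp only [h1]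
      rw [← Finset.sum_smul, htr', zero_smul]
    ext a b
    have hba : E b a = E a b := by
      have := congrFun (congrFun hE a) b
      simpa [transpose_apply] using this
    rw [hsplit, hlast, sub_zero, Matrix.add_apply, sum_entry, sum_entry, hba]
    ring
  rw [key]
  refine Submodule.sum_mem W fun k _ => Submodule.sum_mem W fun l _ => ?_
  apply W.smul_mem
  by_cases h : k = l
  · subst h
    rw [if_pos rfl]
    have : e k k + e k k - (2:ℝ) • e z z = (2:ℝ) • (e k k - e z z) := by module
    rw [this]
    exact W.smul_mem _ (hdiag k)
  · rw [if_neg h, sub_zero]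
    exact hS k l h

end Stmt9

namespace Stmt9
open Matrix
variable {n : ℕ} {W : Submodule ℝ (Matrix (Fin n) (Fin n) ℝ)}

lemma skew_main
    (hconj : ∀ O : Matrix (Fin n) (Fin n) ℝ, O ∈ Matrix.orthogonalGroup (Fin n) ℝ →
      ∀ E ∈ W, O * E * O⁻¹ ∈ W)
    {A : Matrix (Fin n) (Fin n) ℝ} (hA : A ∈ W) {i j : Fin n} (hij : i ≠ j)
    (hne : A i j ≠ 0) (hskew : A j i = -A i j) :
    ∀ E : Matrix (Fin n) (Fin n) ℝ, Eᵀ = -E → E ∈ W := by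
  have hF : ∀ k l : Fin n, k ≠ l → e k l - e l k ∈ W := by
    intro k l hkl
    obtain ⟨C, hC, h1, h2⟩ := move hconj hA hij hkl
    have hx := extract hconj hC hkl
    rw [h1, h2, hskew] at hx
    have heq : A i j • e k l + (-A i j) • e l k = A i j • (e k l - e l k) := by module
    rw [heq] at hx
    have := W.smul_mem (A i j)⁻¹ hx
    rwa [smul_smul, inv_mul_cancel₀ hne, one_smul] at this
  exact fun E hE => skew_span hF hE

lemma sym_main (hn : 2 ≤ n)
    (hconj : ∀ O : Matrix (Fin n) (Fin n) ℝ, O ∈ Matrix.orthogonalGroup (Fin n) ℝ →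
      ∀ E ∈ W, O * E * O⁻¹ ∈ W)
    {A : Matrix (Fin n) (Fin n) ℝ} (hA : A ∈ W) {i j : Fin n} (hij : i ≠ j)
    (hne : A i j ≠ 0) (hsym : A j i = A i j) :
    ∀ E : Matrix (Fin n) (Fin n) ℝ, Eᵀ = E → E.trace = 0 → E ∈ W := by
  have hS : ∀ k l : Fin n, k ≠ l → e k l + e l k ∈ W := by
    intro k l hkl
    obtain ⟨C, hC, h1, h2⟩ := move hconj hA hij hkl
    have hx := extract hconj hC hkl
    rw [h1, h2, hsym] at hx
    have heq : A i j • e k l + A i j • e l k = A i j • (e k l + e l k) := by module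
    rw [heq] at hx
    have := W.smul_mem (A i j)⁻¹ hx
    rwa [smul_smul, inv_mul_cancel₀ hne, one_smul] at this
  have hD : ∀ k l : Fin n, k ≠ l → e k k - e l l ∈ W := by
    intro k l hkl
    have hmem := hconj (H k l) (H_mem hkl) _ (hS k l hkl)
    rwa [H_inv hkl, H_conj_S hkl] at hmem
  exact fun E hE htr => sym_span hn hS hD hE htr

lemma exists_entry_ne {A : Matrix (Fin n) (Fin n) ℝ} (hA0 : A ≠ 0) :
    ∃ a b, A a b ≠ 0 := by
  by_contra h
  push_neg at h
  exact hA0 (by ext a b; simp [h])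

end Stmt9


open Stmt9

/-- The subspaces span{Id}, Sym₀ (trace-free symmetric matrices), and Skew
(skew-symmetric matrices) of the n×n real matrices are irreducible under the
conjugation action of O(n): any O(n)-invariant subspace contained in one of
them is either {0} or the whole subspace. -/
theorem stmt_9 (n : ℕ) (hn : 2 ≤ n) :
    (∀ W : Submodule ℝ (Matrix (Fin n) (Fin n) ℝ),
      (∀ E ∈ W, ∃ c : ℝ, E = c • (1 : Matrix (Fin n) (Fin n) ℝ)) →
      (∀ O : Matrix (Fin n) (Fin n) ℝ, O ∈ Matrix.orthogonalGroup (Fin n) ℝ →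
        ∀ E ∈ W, O * E * O⁻¹ ∈ W) →
      W = ⊥ ∨ ∀ E : Matrix (Fin n) (Fin n) ℝ,
        (∃ c : ℝ, E = c • (1 : Matrix (Fin n) (Fin n) ℝ)) → E ∈ W) ∧
    (∀ W : Submodule ℝ (Matrix (Fin n) (Fin n) ℝ),
      (∀ E ∈ W, Eᵀ = E ∧ E.trace = 0) →
      (∀ O : Matrix (Fin n) (Fin n) ℝ, O ∈ Matrix.orthogonalGroup (Fin n) ℝ →
        ∀ E ∈ W, O * E * O⁻¹ ∈ W) →
      W = ⊥ ∨ ∀ E : Matrix (Fin n) (Fin n) ℝ, Eᵀ = E → E.trace = 0 → E ∈ W) ∧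
    (∀ W : Submodule ℝ (Matrix (Fin n) (Fin n) ℝ),
      (∀ E ∈ W, Eᵀ = -E) →
      (∀ O : Matrix (Fin n) (Fin n) ℝ, O ∈ Matrix.orthogonalGroup (Fin n) ℝ →
        ∀ E ∈ W, O * E * O⁻¹ ∈ W) →
      W = ⊥ ∨ ∀ E : Matrix (Fin n) (Fin n) ℝ, Eᵀ = -E → E ∈ W) := by
  refine ⟨?_, ?_, ?_⟩
  · -- span{Id}
    intro W hsub _hconj
    by_cases hW : W = ⊥
    · exact Or.inl hW
    right
    obtain ⟨A, hA, hA0⟩ := Submodule.exists_mem_ne_zero_of_ne_bot hW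
    obtain ⟨c, hc⟩ := hsub A hA
    have hc0 : c ≠ 0 := by
      rintro rfl
      exact hA0 (by simp [hc])
    rintro E ⟨c', rfl⟩
    have : c' • (1 : Matrix (Fin n) (Fin n) ℝ) = (c' / c) • A := by
      rw [hc, smul_smul, div_mul_cancel₀ _ hc0]
    rw [this]
    exact W.smul_mem _ hA
  · -- Sym₀
    intro W hsub hconj
    by_cases hW : W = ⊥
    · exact Or.inl hW
    right
    obtain ⟨A, hA, hA0⟩ := Submodule.exists_mem_ne_zero_of_ne_bot hW
    obtain ⟨hsymA, htrA⟩ := hsub A hA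
    by_cases hoff : ∃ i j : Fin n, i ≠ j ∧ A i j ≠ 0
    · obtain ⟨i, j, hij, hne⟩ := hoff
      have hsym' : A j i = A i j := by
        have := congrFun (congrFun hsymA i) j
        simpa [Matrix.transpose_apply] using this
      exact sym_main hn hconj hA hij hne hsym'
    · push_neg at hoff
      obtain ⟨a, b, hab⟩ := exists_entry_ne hA0
      have hd : a = b := by
        by_contra h
        exact hab (hoff a b h)
      subst hd
      have hex : ∃ j, A j j ≠ A a a := by
        by_contra h
        push_neg at h
        have htr' : ∑ k : Fin n, A k k = 0 := by
          simpa [Matrix.trace, Matrix.diag] using htrA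
        rw [Finset.sum_congr rfl (fun k _ => h k), Finset.sum_const, Finset.card_univ,
          Fintype.card_fin, nsmul_eq_mul] at htr'
        have hn0 : (n : ℝ) ≠ 0 := Nat.cast_ne_zero.mpr (by omega)
        rcases mul_eq_zero.mp htr' with h' | h'
        · exact hn0 h'
        · exact hab h'
      obtain ⟨j, hj⟩ := hex
      have hij : a ≠ j := by
        rintro rfl
        exact hj rfl
      have hCmem : H a j * A * H a j ∈ W := by
        have := hconj (H a j) (H_mem hij) A hA
        rwa [H_inv hij] at this
      have hoij : A a j = 0 := hoff a j hij
      have hoji : A j a = 0 := hoff j a (Ne.symm hij)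
      have hCij := H_entry_ij hij A hoij hoji
      have hCji := H_entry_ji hij A hoij hoji
      have hne' : (H a j * A * H a j) a j ≠ 0 := by
        rw [hCij]
        exact mul_ne_zero (mul_ne_zero rr_ne_zero rr_ne_zero)
          (sub_ne_zero.mpr (Ne.symm hj))
      have hsym' : (H a j * A * H a j) j a = (H a j * A * H a j) a j := by
        rw [hCij, hCji]
      exact sym_main hn hconj hCmem hij hne' hsym'
  · -- Skew
    intro W hsub hconj
    by_cases hW : W = ⊥
    · exact Or.inl hW
    right
    obtain ⟨A, hA, hA0⟩ := Submodule.exists_mem_ne_zero_of_ne_bot hW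
    have hskewA := hsub A hA
    obtain ⟨a, b, hab⟩ := exists_entry_ne hA0
    have hd : a ≠ b := by
      rintro rfl
      have := congrFun (congrFun hskewA a) a
      simp only [Matrix.transpose_apply, Matrix.neg_apply] at this
      exact hab (by linarith)
    have hskew' : A b a = -A a b := by
      have := congrFun (congrFun hskewA a) b
      simpa [Matrix.transpose_apply] using this
    exact fun E hE => skew_main hconj hA hd hab hskew' E hE
end
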